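/- Antitonicity of feasibility in the probability level for the sMO-PoP model: let 0 < φ ≤ φ' and suppose that for every element i and criterion p the set A_{ip}(φ') = {σ ∈ Σ : α_{ip}(σ) ≥ φ'} is nonempty. If binary variables x_j ∈ {0,1}, y_{ij} ∈ {0,1} satisfy the requirement constraints at level φ', i.e. Σ_{i=1}^m v_{iph}(φ') y_{ij} ≥ u_{jph} x_j for every (j,p,h) ∈ D, then they also satisfy these constraints at level φ, i.e. Σ_{i=1}^m v_{iph}(φ) y_{ij} ≥ u_{jph} x_j for every (j,p,h) ∈ D. Hence the feasible region of the sMO-PoP model shrinks as φ increases. -/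
import Mathlib


open Finset

/-- Exceedance probability: `alpha π g σ = ∑_{o : g o ≥ g σ} π o`. -/
noncomputable def alpha {S : Type*} [Fintype S] (π : S → ℝ) (g : S → ℝ) (σ : S) : ℝ :=
  ∑ o ∈ Finset.univ.filter (fun o => g σ ≤ g o), π o

/-- The set `A(φ) = {σ ∈ Σ : α(σ) ≥ φ}`. -/
noncomputable def Aset {S : Type*} [Fintype S] (π : S → ℝ) (g : S → ℝ) (φ : ℝ) : Finset S :=
  Finset.univ.filter (fun σ => φ ≤ alpha π g σ)

/-- `ρ(φ) = max {g σ : σ ∈ A(φ)}` (as a supremum; it is attained when `A(φ)` is nonempty). -/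
noncomputable def rhoSup {S : Type*} [Fintype S] (π : S → ℝ) (g : S → ℝ) (φ : ℝ) : ℝ :=
  sSup (g '' {σ | φ ≤ alpha π g σ})

/-- Antitonicity of feasibility in the probability level for the sMO-PoP model: if the
requirement constraints hold at level `φ'`, then they also hold at any smaller positive
level `φ`; hence the feasible region of the sMO-PoP model shrinks as `φ` increases. -/
theorem smopop_feasibility_antitone {S : Type*} [Fintype S] [Nonempty S]
    {m n : ℕ} {Crit Lv : Type*}
    (π : S → ℝ) (hπ : ∀ σ, 0 ≤ π σ) (hsum : ∑ σ, π σ = 1)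
    (g : Fin m → Crit → S → ℝ)
    (l : Crit → Lv → ℝ)
    (u : Fin n → Crit → Lv → ℕ)
    (D : Set (Fin n × Crit × Lv))
    (x : Fin n → ℕ) (y : Fin m → Fin n → ℕ)
    (hx : ∀ j, x j ≤ 1) (hy : ∀ i j, y i j ≤ 1)
    (φ φ' : ℝ) (hφ : 0 < φ) (hle : φ ≤ φ')
    (hne' : ∀ i p, (Aset π (g i p) φ').Nonempty)
    (v : Fin m → Crit → Lv → ℝ → ℕ)
    (hv : ∀ i p h ψ, v i p h ψ = if l p h ≤ rhoSup π (g i p) ψ then 1 else 0)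
    (hreq' : ∀ j p h, (j, p, h) ∈ D → u j p h * x j ≤ ∑ i, v i p h φ' * y i j) :
    ∀ j p h, (j, p, h) ∈ D → u j p h * x j ≤ ∑ i, v i p h φ * y i j := by
  intro j p h hD
  have key : ∀ i, v i p h φ' ≤ v i p h φ := by
    intro i
    have hrho : rhoSup π (g i p) φ' ≤ rhoSup π (g i p) φ := by
      obtain ⟨σ0, hσ0⟩ := hne' i p
      simp only [Aset, Finset.mem_filter] at hσ0
      apply csSup_le_csSup
      · exact (Set.toFinite _).bddAbove
      · exact ⟨g i p σ0, σ0, hσ0.2, rfl⟩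
      · rintro _ ⟨σ, hσ, rfl⟩
        exact ⟨σ, le_trans hle hσ, rfl⟩
    rw [hv, hv]
    split_ifs with h1 h2
    · exact le_refl 1
    · exact absurd (le_trans h1 hrho) h2
    · exact Nat.zero_le _
    · exact le_refl 0
  exact le_trans (hreq' j p h hD)
    (Finset.sum_le_sum fun i _ => Nat.mul_le_mul_right _ (key i))
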